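/- The row vector π = (π0, π1, π2, π3) with π0 = (1 - q·(1-ps))·q10 / D, π1 = (1-ps)·q10·q01 / D, π2 = (1-ps)·q10·q01 / D, π3 = (1 - (1-ps)·q00)·q01 / D, where q = 1 - q10 (i.e., p^X_{1,1}), q00 = 1 - q01, and D = (q01 + q10)·(1 + (1-ps)·(q10 - q00)), is a stationary distribution of the 4-state Markov chain with transition matrix P given below; i.e., πP = π, the entries of π are nonnegative, and they sum to 1. -/

import Mathlib

open Matrix

/-- The explicit vector `π` is a stationary distribution of the 4-state
Markov chain on `(X, X̂)` pairs with the given transition matrix. -/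
theorem four_state_stationary (q01 q10 ps : ℝ)
    (hq01 : q01 ∈ Set.Ioo (0:ℝ) 1) (hq10 : q10 ∈ Set.Ioo (0:ℝ) 1)
    (hps : ps ∈ Set.Icc (0:ℝ) 1)
    (q00 q11 D : ℝ) (hq00 : q00 = 1 - q01) (hq11 : q11 = 1 - q10)
    (hD : D = (q01 + q10) * (1 + (1 - ps) * (q10 - q00))) (hDne : D ≠ 0) :
    let P : Matrix (Fin 4) (Fin 4) ℝ :=
      !![q00,       0,                q01 * (1 - ps), q01 * ps;
         q00 * ps,  q00 * (1 - ps),   0,              q01;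
         q10,       0,                q11 * (1 - ps), q11 * ps;
         q10 * ps,  q10 * (1 - ps),   0,              q11]
    let π : Fin 4 → ℝ :=
      ![(1 - q11 * (1 - ps)) * q10 / D,
        (1 - ps) * q10 * q01 / D,
        (1 - ps) * q10 * q01 / D,
        (1 - (1 - ps) * q00) * q01 / D]
    π ᵥ* P = π ∧ (∀ i, 0 ≤ π i) ∧ (∑ i, π i) = 1 := by
  obtain ⟨h01a, h01b⟩ := hq01
  obtain ⟨h10a, h10b⟩ := hq10
  obtain ⟨hpa, hpb⟩ := hps
  subst hq00 hq11 hD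
  have hDpos : 0 < (q01 + q10) * (1 + (1 - ps) * (q10 - (1 - q01))) := by
    have h1 : 0 < q01 + q10 := by linarith
    have h2 : 0 < 1 + (1 - ps) * (q10 - (1 - q01)) := by nlinarith
    positivity
  have hm0 : (1 - q10) * (1 - ps) ≤ 1 :=
    mul_le_one₀ (by linarith) (by linarith) (by linarith)
  have hm3 : (1 - ps) * (1 - q01) ≤ 1 :=
    mul_le_one₀ (by linarith) (by linarith) (by linarith)
  have hn0 : (0:ℝ) ≤ (1 - (1 - q10) * (1 - ps)) * q10 :=
    mul_nonneg (by linarith) h10a.le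
  have hn3 : (0:ℝ) ≤ (1 - (1 - ps) * (1 - q01)) * q01 :=
    mul_nonneg (by linarith) h01a.le
  have hn1 : (0:ℝ) ≤ (1 - ps) * q10 * q01 :=
    mul_nonneg (mul_nonneg (by linarith) h10a.le) h01a.le
  intro P π
  refine ⟨?_, ?_, ?_⟩
  · funext i
    fin_cases i <;>
      simp [P, π, vecMul, dotProduct, Fin.sum_univ_four] <;>
      field_simp <;> ring
  · intro i
    fin_cases i <;> simp [π] <;> exact div_nonneg (by assumption) hDpos.le
  · simp [π, Fin.sum_univ_four]
    field_simp
    have h2 : 1 + (1 - ps) * (q10 - (1 - q01)) ≠ 0 := ne_of_gt (by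
      nlinarith [mul_nonneg (sub_nonneg.2 hpb) h10a.le, mul_nonneg hpa (sub_nonneg.2 h01b.le)])
    rw [div_eq_iff h2]
    ring
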